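/- Let w ∈ A* be the shortest period of the periodic infinite word u = w^ω over a finite alphabet A (where every letter of A occurs in w), and suppose the language of u is closed under a non-erasing antimorphism Θ : A* → A* of finite order. Then w can be written as w = ps where both p and s are Θ-palindromes (one of them possibly empty). -/

import Mathlib

open scoped Classical

/-- The finite word `w` occurs in the infinite word `u` at position `i`. -/
def OccursAt {A : Type*} (u : ℕ → A) (w : List A) (i : ℕ) : Prop :=
  w = (List.range w.length).map fun k => u (i + k)

/-- The finite word `w` is a factor of the infinite word `u`. -/
def IsFactor {A : Type*} (u : ℕ → A) (w : List A) : Prop :=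
  ∃ i, OccursAt u w i

/-- The (involutive) antimorphism of `A*` induced by the letter map `θ`:
it reverses a word and applies `θ` letterwise. -/
def antim {A : Type*} (θ : A → A) (w : List A) : List A :=
  (w.map θ).reverse

/-- `w` is a `θ`-palindrome, i.e. a fixed point of the antimorphism induced by `θ`. -/
def IsPalin {A : Type*} (θ : A → A) (w : List A) : Prop :=
  antim θ w = w

/-- Factor complexity of the infinite word `u`. -/
noncomputable def fC {A : Type*} (u : ℕ → A) (n : ℕ) : ℕ :=
  Set.ncard {w : List A | w.length = n ∧ IsFactor u w}

/-- `θ`-palindromic complexity of the infinite word `u`. -/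
noncomputable def fP {A : Type*} (u : ℕ → A) (θ : A → A) (n : ℕ) : ℕ :=
  Set.ncard {w : List A | w.length = n ∧ IsFactor u w ∧ IsPalin θ w}

/-- `γ_Θ(w)`: the number of pairs `{a, θ a}` with `a` occurring in `w` and `a ≠ θ a`. -/
noncomputable def gammaTheta {A : Type*} (θ : A → A) (w : List A) : ℕ :=
  Set.ncard {s : Set A | ∃ a ∈ w, θ a ≠ a ∧ s = {a, θ a}}

/-- The set of `θ`-palindromic factors of the finite word `w`. -/
def palFactors {A : Type*} (θ : A → A) (w : List A) : Set (List A) :=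
  {p | p <:+: w ∧ IsPalin θ p}

/-- The `Θ`-defect of a finite word `w`. -/
noncomputable def defect {A : Type*} (θ : A → A) (w : List A) : ℤ :=
  (w.length : ℤ) + 1 - gammaTheta θ w - Set.ncard (palFactors θ w)

/-- The number of occurrences of `w` in the finite word `v`. -/
noncomputable def numOcc {A : Type*} (w v : List A) : ℕ :=
  Set.ncard {i : ℕ | i + w.length ≤ v.length ∧ w <+: v.drop i}

/-- If `w` is the shortest period of the periodic word `u = w^ω`
(containing every letter of the finite alphabet `A`), and the language of `u` is closed
under a non-erasing antimorphism `Θ` of finite order, then `w = p ++ s` where both `p`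
and `s` are `Θ`-palindromes. -/
theorem periodic_closed_antimorphism_period_splits_into_palindromes
    {A : Type*} [Fintype A] (w : List A) (hw : w ≠ [])
    (u : ℕ → A)
    (hall : ∀ a : A, a ∈ w)
    (hpre : OccursAt u w 0)
    (hper : ∀ n : ℕ, u (n + w.length) = u n)
    (hmin : ∀ v : List A, v ≠ [] → OccursAt u v 0 →
      (∀ n : ℕ, u (n + v.length) = u n) → w.length ≤ v.length)
    (Θ : List A → List A)
    (hanti : ∀ v₁ v₂ : List A, Θ (v₁ ++ v₂) = Θ v₂ ++ Θ v₁)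
    (hnonerasing : ∀ a : A, Θ [a] ≠ [])
    (hfin : ∃ k : ℕ, 1 ≤ k ∧ Θ^[k] = id)
    (hclosed : ∀ v : List A, IsFactor u v → IsFactor u (Θ v)) :
    ∃ p s : List A, Θ p = p ∧ Θ s = s ∧ w = p ++ s := by
  have hL : 0 < w.length := List.length_pos_iff.mpr hw
  -- Θ [] = []
  have hnil : Θ [] = ([] : List A) := by
    have h := hanti [] []
    rw [List.nil_append] at h
    have hl := congrArg List.length h
    rw [List.length_append] at hl
    have : (Θ ([] : List A)).length = 0 := by omega
    exact List.length_eq_zero_iff.mp this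
  -- Θ does not decrease length
  have hlen_ge : ∀ v : List A, v.length ≤ (Θ v).length := by
    intro v
    induction v with
    | nil => simp [hnil]
    | cons a t ih =>
      have h := hanti [a] t
      rw [List.singleton_append] at h
      rw [h, List.length_append, List.length_cons]
      have ha : 1 ≤ (Θ [a]).length := List.length_pos_iff.mpr (hnonerasing a)
      omega
  have hlen_iter : ∀ m (v : List A), v.length ≤ (Θ^[m] v).length := by
    intro m
    induction m with
    | zero => simp
    | succ n ih =>
      intro v
      rw [Function.iterate_succ_apply]
      exact le_trans (hlen_ge v) (ih (Θ v))
  -- Θ preserves length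
  have hlen : ∀ v : List A, (Θ v).length = v.length := by
    intro v
    obtain ⟨k, hk1, hk⟩ := hfin
    obtain ⟨m, rfl⟩ := Nat.exists_eq_add_of_le hk1
    have hk' : Θ^[m + 1] = id := by rwa [Nat.add_comm] at hk
    have h1 : Θ^[m] (Θ v) = v := by
      have := congrFun hk' v
      rwa [Function.iterate_succ_apply] at this
    have h2 : (Θ v).length ≤ v.length := by
      have := hlen_iter m (Θ v)
      rwa [h1] at this
    exact le_antisymm h2 (hlen_ge v)
  -- u is determined by w via mod
  have hu : ∀ n, u n = u (n % w.length) := by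
    intro n
    induction n using Nat.strong_induction_on with
    | _ n ih =>
      rcases lt_or_ge n w.length with h | h
      · rw [Nat.mod_eq_of_lt h]
      · have h1 : n - w.length + w.length = n := Nat.sub_add_cancel h
        have h2 := hper (n - w.length)
        rw [h1] at h2
        rw [h2, ih _ (by omega), Nat.mod_eq_sub_mod h]
  have hw_elem : ∀ (k : ℕ) (h : k < w.length), w[k] = u k := by
    intro k h
    rw [List.getElem_of_eq hpre h, List.getElem_map, List.getElem_range, Nat.zero_add]
  -- Θ w is a factor of u
  obtain ⟨i, hocc⟩ := hclosed w ⟨0, hpre⟩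
  have hocc' : Θ w = (List.range (Θ w).length).map fun k => u (i + k) := hocc
  set L := w.length with hLdef
  set j := i % L with hjdef
  have hj : j < L := Nat.mod_lt _ hL
  have key : Θ w = w.drop j ++ w.take j := by
    apply List.ext_getElem
    · rw [hlen, List.length_append, List.length_drop, List.length_take]
      omega
    · intro k h1 h2
      have hk' : k < L := by rwa [hlen] at h1
      have lhs_eq : (Θ w)[k]'h1 = u (i + k) := by
        rw [List.getElem_of_eq hocc' h1, List.getElem_map, List.getElem_range]
      rw [lhs_eq]
      have hmod : (i + k) % L = (j + k) % L := by simp only [hjdef, hLdef]; exact (Nat.mod_add_mod i w.length k).symm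
      have huk : u (i + k) = u ((j + k) % L) := by rw [hu (i + k), hmod]
      rcases lt_or_ge k (L - j) with hcase | hcase
      · have hidx : (j + k) % L = j + k := Nat.mod_eq_of_lt (by omega)
        rw [huk, hidx, List.getElem_append_left (by rw [List.length_drop]; omega),
          List.getElem_drop]
        exact (hw_elem (j + k) (by omega)).symm
      · have hidx : (j + k) % L = j + k - L := by
          rw [Nat.mod_eq_sub_mod (by omega), Nat.mod_eq_of_lt (by omega)]
        rw [huk, hidx, List.getElem_append_right (by rw [List.length_drop]; omega)]
        rw [List.getElem_take]
        rw [getElem_congr_idx (show k - (w.drop j).length = j + k - L by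
          rw [List.length_drop]; omega)]
        exact (hw_elem (j + k - L) (by omega)).symm
  -- conclude
  have hsplit : w = w.take j ++ w.drop j := (List.take_append_drop j w).symm
  have hTheta : Θ (w.drop j) ++ Θ (w.take j) = w.drop j ++ w.take j := by
    rw [← hanti, ← hsplit, key]
  have hlen_drop : (Θ (w.drop j)).length = (w.drop j).length := hlen _
  obtain ⟨h1, h2⟩ := List.append_inj hTheta hlen_drop
  exact ⟨w.take j, w.drop j, h2, h1, hsplit⟩
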